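/- If P and Q are rational polytopes (convex hulls of finitely many points of ℚ^d) in ℝ^d, then the square of the Euclidean distance between P and Q is a rational number. -/

import Mathlib

open Pointwise RealInnerProductSpace

private lemma ratproj (d : ℕ) (S : Finset (Fin d → ℚ)) (w₀ : Fin d → ℚ) :
    ∃ b : Fin d → ℚ, (w₀ - b) ∈ Submodule.span ℚ (S : Set (Fin d → ℚ)) ∧
      ∀ s ∈ Submodule.span ℚ (S : Set (Fin d → ℚ)), ∑ i, b i * s i = 0 := by
  set B : LinearMap.BilinForm ℚ (Fin d → ℚ) := LinearMap.mk₂ ℚ (fun a b => ∑ i, a i * b i)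
    (fun a a' b => by simp [add_mul, Finset.sum_add_distrib])
    (fun c a b => by simp [Finset.mul_sum, mul_assoc])
    (fun a b b' => by simp [mul_add, Finset.sum_add_distrib])
    (fun c a b => by simp [Finset.mul_sum]; exact Finset.sum_congr rfl fun i _ => by ring) with hB
  have hrefl : B.IsRefl := fun a b h => by
    simpa [hB, mul_comm] using h
  set W : Submodule ℚ (Fin d → ℚ) := Submodule.span ℚ (S : Set (Fin d → ℚ)) with hW
  have hnd : (B.restrict W).Nondegenerate := by
    refine (LinearMap.IsRefl.nondegenerate_iff_separatingLeft (B := B.restrict W) (fun a b h => hrefl _ _ h)).mpr ?_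
    intro ⟨w, hw⟩ h
    have h2 := h ⟨w, hw⟩
    simp only [LinearMap.BilinForm.restrict_apply, LinearMap.domRestrict_apply, hB,
      LinearMap.mk₂_apply] at h2
    have : ∀ i ∈ Finset.univ, w i * w i = 0 := by
      rw [← Finset.sum_eq_zero_iff_of_nonneg (fun i _ => mul_self_nonneg (w i))]
      exact h2
    ext i
    simpa [mul_self_eq_zero] using this i (Finset.mem_univ i)
  have hc := B.isCompl_orthogonal_of_restrict_nondegenerate hrefl hnd
  have : w₀ ∈ W ⊔ B.orthogonal W := by rw [hc.sup_eq_top]; trivial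
  obtain ⟨a, ha, b, hb, hab⟩ := Submodule.mem_sup.mp this
  refine ⟨b, by simpa [← hab] using ha, fun s hs => ?_⟩
  have := (LinearMap.BilinForm.mem_orthogonal_iff.mp hb) s hs
  simpa [hB, LinearMap.BilinForm.IsOrtho, mul_comm] using hrefl _ _ this

/-- If P and Q are rational polytopes (convex hulls of finitely many
points of ℚ^d) in ℝ^d, then the square of the Euclidean distance between P and Q
is a rational number. -/
theorem stmt_3 (d : ℕ) (P Q : Set (EuclideanSpace ℝ (Fin d)))
    (VP VQ : Finset (EuclideanSpace ℝ (Fin d))) (hVP : VP.Nonempty) (hVQ : VQ.Nonempty)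
    (hratP : ∀ v ∈ VP, ∀ i, ∃ r : ℚ, v i = r)
    (hratQ : ∀ v ∈ VQ, ∀ i, ∃ r : ℚ, v i = r)
    (hP : P = convexHull ℝ (VP : Set (EuclideanSpace ℝ (Fin d))))
    (hQ : Q = convexHull ℝ (VQ : Set (EuclideanSpace ℝ (Fin d)))) :
    ∃ r : ℚ, (sInf (Set.image2 dist P Q)) ^ 2 = (r : ℝ) := by
  classical
  set D : Finset (EuclideanSpace ℝ (Fin d)) := VP - VQ with hDdef
  have hDrat : ∀ u ∈ D, ∀ i, ∃ r : ℚ, u i = r := by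
    intro u hu i
    obtain ⟨v, hv, w, hw, rfl⟩ := Finset.mem_sub.mp hu
    obtain ⟨r1, h1⟩ := hratP v hv i
    obtain ⟨r2, h2⟩ := hratQ w hw i
    exact ⟨r1 - r2, by push_cast; rw [← h1, ← h2, PiLp.sub_apply]⟩
  set K : Set (EuclideanSpace ℝ (Fin d)) := convexHull ℝ (D : Set (EuclideanSpace ℝ (Fin d))) with hKdef
  have hKne : K.Nonempty := by
    obtain ⟨v, hv⟩ := hVP
    obtain ⟨w, hw⟩ := hVQ
    exact ⟨v - w, subset_convexHull ℝ _
      (Finset.mem_coe.mpr (Finset.mem_sub.mpr ⟨v, hv, w, hw, rfl⟩))⟩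
  have hKcpt : IsCompact K := D.finite_toSet.isCompact_convexHull ℝ
  have himg : Set.image2 dist P Q = norm '' K := by
    rw [hP, hQ, hKdef, hDdef, Finset.coe_sub, convexHull_sub, ← Set.image2_sub,
      Set.image_image2]
    simp only [dist_eq_norm]
  obtain ⟨x, hxK, hsinf, hmin⟩ :=
    hKcpt.exists_sInf_image_eq_and_le hKne continuous_norm.continuousOn
  -- variational inequality
  have hvar : ∀ y ∈ K, 0 ≤ (⟪x, y - x⟫ : ℝ) := by
    intro y hy
    by_contra hneg
    push_neg at hneg
    have hyx : y - x ≠ 0 := by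
      intro h; rw [h, inner_zero_right] at hneg; exact lt_irrefl _ hneg
    set c : ℝ := ⟪x, y - x⟫ with hc
    set n2 : ℝ := ‖y - x‖ ^ 2 with hn2
    have hn2pos : 0 < n2 := pow_pos (norm_pos_iff.mpr hyx) 2
    set t : ℝ := min 1 (-c / n2) with ht
    have ht0 : 0 < t := lt_min one_pos (div_pos (neg_pos.mpr hneg) hn2pos)
    have ht1 : t ≤ 1 := min_le_left _ _
    have hz : x + t • (y - x) ∈ K := by
      have hcvx := (convex_convexHull ℝ (D : Set (EuclideanSpace ℝ (Fin d)))) hxK hy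
        (by linarith : (0:ℝ) ≤ 1 - t) (le_of_lt ht0) (by ring)
      have : (1 - t) • x + t • y = x + t • (y - x) := by
        rw [smul_sub, sub_smul, one_smul]; abel
      rwa [this] at hcvx
    have h1 : ‖x‖ ≤ ‖x + t • (y - x)‖ := hmin _ hz
    have h2 : ‖x + t • (y - x)‖ ^ 2 = ‖x‖ ^ 2 + 2 * (t * c) + t ^ 2 * n2 := by
      rw [norm_add_sq_real, real_inner_smul_right, norm_smul]
      simp only [Real.norm_eq_abs, abs_of_pos ht0, mul_pow]
      try ring
    have h3 : ‖x‖ ^ 2 ≤ ‖x + t • (y - x)‖ ^ 2 :=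
      pow_le_pow_left₀ (norm_nonneg _) h1 2
    have htn : t * n2 ≤ -c := (le_div_iff₀ hn2pos).mp (min_le_right _ _)
    nlinarith [mul_le_mul_of_nonneg_left htn (le_of_lt ht0)]
  -- convex combination representation
  rw [hKdef, Finset.convexHull_eq] at hxK
  obtain ⟨w, hw0, hw1, hwx⟩ := hxK
  rw [Finset.centerMass_eq_of_sum_1 _ id hw1] at hwx
  simp only [id] at hwx
  have hDK : (D : Set (EuclideanSpace ℝ (Fin d))) ⊆ K := subset_convexHull ℝ _
  have hterm : ∀ u ∈ D, w u * ⟪x, u - x⟫ = 0 := by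
    have hsum0 : ∑ u ∈ D, w u • (u - x) = 0 := by
      simp only [smul_sub, Finset.sum_sub_distrib, hwx, ← Finset.sum_smul, hw1, one_smul,
        sub_self]
    have hsum : ∑ u ∈ D, w u * ⟪x, u - x⟫ = 0 := by
      calc ∑ u ∈ D, w u * (⟪x, u - x⟫ : ℝ)
          = ∑ u ∈ D, (⟪x, w u • (u - x)⟫ : ℝ) := by
            refine Finset.sum_congr rfl fun u _ => ?_
            rw [real_inner_smul_right]
        _ = ⟪x, ∑ u ∈ D, w u • (u - x)⟫ := (inner_sum D _ x).symm
        _ = 0 := by rw [hsum0, inner_zero_right]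
    rw [Finset.sum_eq_zero_iff_of_nonneg
      (fun u hu => mul_nonneg (hw0 u hu) (hvar u (hDK hu)))] at hsum
    exact hsum
  set S : Finset (EuclideanSpace ℝ (Fin d)) := D.filter (fun u => w u ≠ 0) with hSdef
  have hSsub : S ⊆ D := Finset.filter_subset _ _
  have hSsum : ∑ u ∈ S, w u = 1 := by rw [hSdef, Finset.sum_filter_ne_zero]; exact hw1
  have hxS : ∑ u ∈ S, w u • u = x := by
    rw [hSdef, ← hwx]
    exact Finset.sum_filter_of_ne (fun u hu h hw => h (by rw [hw, zero_smul]))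
  have hSne : S.Nonempty := by
    rcases Finset.eq_empty_or_nonempty S with h | h
    · rw [h, Finset.sum_empty] at hSsum; norm_num at hSsum
    · exact h
  obtain ⟨u₀, hu₀⟩ := hSne
  have hort : ∀ u ∈ S, (⟪x, u - x⟫ : ℝ) = 0 := by
    intro u hu
    have hw := (Finset.mem_filter.mp hu).2
    have := hterm u (hSsub hu)
    exact (mul_eq_zero.mp this).resolve_left hw
  have hort2 : ∀ u ∈ S, (⟪x, u - u₀⟫ : ℝ) = 0 := by
    intro u hu
    rw [← sub_sub_sub_cancel_right u u₀ x, inner_sub_right, hort u hu, hort u₀ hu₀, sub_zero]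
  -- rational lifts
  have hlift : ∀ u : EuclideanSpace ℝ (Fin d), ∃ qq : Fin d → ℚ, u ∈ D → ∀ i, u i = qq i := by
    intro u
    by_cases hu : u ∈ D
    · choose qq hqq using hDrat u hu
      exact ⟨qq, fun _ => hqq⟩
    · exact ⟨0, fun h => absurd h hu⟩
  choose q hq using hlift
  set f : (Fin d → ℚ) → EuclideanSpace ℝ (Fin d) := fun a => WithLp.toLp 2 (fun i => (a i : ℝ)) with hf
  have hfu : ∀ u ∈ S, f (q u) = u := by
    intro u hu
    ext i
    exact ((hq u (hSsub hu)) i).symm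
  have hfsub : ∀ a b, f (a - b) = f a - f b := by
    intro a b; ext i
    simp only [hf, PiLp.toLp_apply, PiLp.sub_apply, Pi.sub_apply]
    push_cast; ring
  have hfadd : ∀ a b, f (a + b) = f a + f b := by
    intro a b; ext i
    simp only [hf, PiLp.toLp_apply, PiLp.add_apply, Pi.add_apply]
    push_cast; ring
  have hfsmul : ∀ (c : ℚ) a, f (c • a) = (c : ℝ) • f a := by
    intro c a; ext i
    simp only [hf, PiLp.toLp_apply, PiLp.smul_apply, Pi.smul_apply, smul_eq_mul]
    push_cast; ring
  set S' : Finset (Fin d → ℚ) := S.image (fun u => q u - q u₀) with hS'def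
  set U : Submodule ℝ (EuclideanSpace ℝ (Fin d)) :=
    Submodule.span ℝ (f '' (S' : Set (Fin d → ℚ))) with hU
  have hgen : ∀ u ∈ S, f (q u - q u₀) = u - u₀ := by
    intro u hu
    rw [hfsub, hfu u hu, hfu u₀ hu₀]
  have hfspan : ∀ a ∈ Submodule.span ℚ (S' : Set (Fin d → ℚ)), f a ∈ U := by
    intro a ha
    induction ha using Submodule.span_induction with
    | mem v hv => exact Submodule.subset_span ⟨v, hv, rfl⟩
    | zero =>
      have : f 0 = 0 := by
        ext i; simp only [hf, PiLp.toLp_apply, PiLp.zero_apply, Pi.zero_apply, Rat.cast_zero]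
      rw [this]; exact Submodule.zero_mem _
    | add v v' _ _ hv hv' => rw [hfadd]; exact Submodule.add_mem _ hv hv'
    | smul c v _ hv => rw [hfsmul]; exact Submodule.smul_mem _ _ hv
  have hxU : x - u₀ ∈ U := by
    have hrepr : x - u₀ = ∑ u ∈ S, w u • (u - u₀) := by
      simp only [smul_sub, Finset.sum_sub_distrib, hxS, ← Finset.sum_smul, hSsum, one_smul]
    rw [hrepr]
    exact Submodule.sum_smul_mem U _ (fun u hu => by
      rw [← hgen u hu]
      exact Submodule.subset_span ⟨q u - q u₀, Finset.mem_coe.mpr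
        (Finset.mem_image_of_mem _ hu), rfl⟩)
  obtain ⟨b, hb1, hb2⟩ := ratproj d S' (q u₀)
  set y : EuclideanSpace ℝ (Fin d) := f b with hy
  have hyU : y - u₀ ∈ U := by
    have : y - u₀ = -(f (q u₀ - b)) := by
      rw [hfsub, hfu u₀ hu₀]; abel
    rw [this]
    exact Submodule.neg_mem _ (hfspan _ hb1)
  have hinner_fs : ∀ a s : Fin d → ℚ, (⟪f a, f s⟫ : ℝ) = ((∑ i, a i * s i : ℚ) : ℝ) := by
    intro a s
    rw [PiLp.inner_apply]
    push_cast
    simp only [hf, PiLp.toLp_apply, RCLike.inner_apply, conj_trivial]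
    exact Finset.sum_congr rfl fun i _ => mul_comm _ _
  have horthy : ∀ s ∈ S', (⟪y, f s⟫ : ℝ) = 0 := by
    intro s hs
    rw [hy, hinner_fs, hb2 s (Submodule.subset_span hs)]
    norm_num
  have horthx : ∀ s ∈ S', (⟪x, f s⟫ : ℝ) = 0 := by
    intro s hs
    obtain ⟨u, hu, rfl⟩ := Finset.mem_image.mp hs
    rw [hgen u hu]
    exact hort2 u hu
  have hzy : x = y := by
    set z : EuclideanSpace ℝ (Fin d) := x - y with hz
    have hzU : z ∈ U := by
      have : z = (x - u₀) - (y - u₀) := by rw [hz]; abel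
      rw [this]; exact Submodule.sub_mem _ hxU hyU
    have hle : U ≤ (ℝ ∙ z)ᗮ := by
      rw [hU]
      apply Submodule.span_le.mpr
      rintro v ⟨s, hs, rfl⟩
      apply Submodule.mem_orthogonal_singleton_iff_inner_left.mpr
      rw [real_inner_comm, hz, inner_sub_left, horthx s hs, horthy s hs, sub_zero]
    have hzz : (⟪z, z⟫ : ℝ) = 0 :=
      Submodule.mem_orthogonal_singleton_iff_inner_left.mp (hle hzU)
    have : z = 0 := inner_self_eq_zero.mp hzz
    rw [hz] at this
    exact sub_eq_zero.mp this
  refine ⟨∑ i, b i ^ 2, ?_⟩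
  rw [himg, hsinf, hzy, hy]
  rw [EuclideanSpace.norm_eq, Real.sq_sqrt (Finset.sum_nonneg fun i _ => sq_nonneg _)]
  push_cast
  refine Finset.sum_congr rfl fun i _ => ?_
  have : f b i = ((b i : ℝ)) := by simp only [hf, PiLp.toLp_apply]
  rw [this, Real.norm_eq_abs, sq_abs]
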